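/- Let X and Y be real Banach spaces, let N be an absolute normalized norm on ℝ², and let γ > 0 be such that N(a,b) ≥ γ(|a| + |b|) for all (a,b) ∈ ℝ². Then 𝒯^cc(X ⊕_N Y) ≥ 2γ(min{𝒯^cc(X), 𝒯^cc(Y)} − 1). -/

import Mathlib

open Metric Set

noncomputable section

variable (X : Type*) [NormedAddCommGroup X] [NormedSpace ℝ X]

/-- A subset `U` of `X` is weakly open if it is open in the weak topology of `X`. -/
def IsWeaklyOpen (U : Set X) : Prop := IsOpen (toWeakSpace ℝ X '' U)

/-- The slice `S(B_X, f, α) = {x ∈ B_X : f x > 1 - α}` of the closed unit ball of `X`. -/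
def sliceSet (f : X →L[ℝ] ℝ) (α : ℝ) : Set X :=
  {y ∈ closedBall (0 : X) 1 | 1 - α < f y}

/-- `S` is a slice of the closed unit ball of `X`, i.e. `S = S(B_X, f, α)` for some norm-one
functional `f` and some `α > 0`. -/
def IsSlice (S : Set X) : Prop :=
  ∃ f : X →L[ℝ] ℝ, ‖f‖ = 1 ∧ ∃ α > (0 : ℝ), S = sliceSet X f α

/-- The Daugavet index of thickness `𝒯ˢ(X)`: the infimum of all `r > 0` such that some slice of
the closed unit ball is contained in a closed ball of radius `r` centered at a point of the unit
sphere. -/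
def Ts : ℝ :=
  sInf {r : ℝ | 0 < r ∧ ∃ x : X, ‖x‖ = 1 ∧ ∃ S : Set X, IsSlice X S ∧ S ⊆ closedBall x r}

/-- `W` is a nonempty relatively weakly open subset of the closed unit ball of `X`. -/
def IsRelWeakOpen (W : Set X) : Prop :=
  W.Nonempty ∧ ∃ U : Set X, IsWeaklyOpen X U ∧ W = closedBall (0 : X) 1 ∩ U

/-- The Daugavet index of thickness `𝒯(X)`: the infimum of all `r > 0` such that some nonempty
relatively weakly open subset of the closed unit ball is contained in a closed ball of radius `r`
centered at a point of the unit sphere. -/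
def Tw : ℝ :=
  sInf {r : ℝ | 0 < r ∧ ∃ x : X, ‖x‖ = 1 ∧ ∃ W : Set X, IsRelWeakOpen X W ∧
    W ⊆ closedBall x r}

/-- The convex combination `∑ i, l i • W i` of the sets `W i` (the set of all sums
`∑ i, l i • w i` with `w i ∈ W i`). -/
def comboSet {n : ℕ} (l : Fin n → ℝ) (W : Fin n → Set X) : Set X :=
  {z : X | ∃ w : Fin n → X, (∀ i, w i ∈ W i) ∧ z = ∑ i, l i • w i}

/-- The Daugavet index of thickness `𝒯ᶜᶜ(X)`: the infimum of all `r > 0` such that some convex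
combination of nonempty relatively weakly open subsets of the closed unit ball is contained in a
closed ball of radius `r` centered at a point of the unit sphere. -/
def Tcc : ℝ :=
  sInf {r : ℝ | 0 < r ∧ ∃ x : X, ‖x‖ = 1 ∧ ∃ (n : ℕ) (l : Fin n → ℝ) (W : Fin n → Set X),
    (∀ i, 0 ≤ l i) ∧ (∑ i, l i) = 1 ∧ (∀ i, IsRelWeakOpen X (W i)) ∧
    comboSet X l W ⊆ closedBall x r}

/-- `X` has the Daugavet property: for every `x` in the unit sphere, every `ε > 0` and every
slice `S` of the closed unit ball there exists `y ∈ S` with `‖x - y‖ ≥ 2 - ε`. -/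
def DaugavetProperty : Prop :=
  ∀ x : X, ‖x‖ = 1 → ∀ ε > (0 : ℝ), ∀ S : Set X, IsSlice X S → ∃ y ∈ S, 2 - ε ≤ ‖x - y‖

section AuxLemmas

variable {X}

lemma aux_isWeaklyOpen_univ : IsWeaklyOpen X (univ : Set X) := by
  unfold IsWeaklyOpen
  rw [Set.image_univ, Set.range_eq_univ.mpr (toWeakSpace ℝ X).surjective]
  exact isOpen_univ

lemma aux_isOpen_of_isWeaklyOpen {U : Set X} (h : IsWeaklyOpen X U) : IsOpen U := by
  apply WeakSpace.isOpen_of_isOpen (𝕜 := ℝ)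
  have : (toWeakSpaceCLM ℝ X '' U) = (toWeakSpace ℝ X '' U) :=
    Set.image_congr' (fun x => rfl)
  rw [this]; exact h

lemma aux_isWeaklyOpen_conds {ι : Type*} (I : Finset ι) (g : ι → (X →L[ℝ] ℝ)) (c : ι → ℝ)
    (δ : ℝ) : IsWeaklyOpen X {x : X | ∀ f ∈ I, |g f x - c f| < δ} := by
  unfold IsWeaklyOpen
  have himg : toWeakSpace ℝ X '' {x : X | ∀ f ∈ I, |g f x - c f| < δ}
      = ⋂ f ∈ I, (fun (x : WeakSpace ℝ X) => g f ((toWeakSpace ℝ X).symm x)) ⁻¹' (ball (c f) δ) := by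
    ext p
    simp only [Set.mem_iInter, Set.mem_preimage, mem_ball, Real.dist_eq]
    constructor
    · rintro ⟨x, hx, rfl⟩ f hf
      exact hx f hf
    · intro hp
      exact ⟨(toWeakSpace ℝ X).symm p, hp, (toWeakSpace ℝ X).apply_symm_apply p⟩
  rw [himg]
  refine isOpen_biInter_finset fun f hf => ?_
  have hcont : Continuous (fun (x : WeakSpace ℝ X) => g f ((toWeakSpace ℝ X).symm x)) :=
    WeakBilin.eval_continuous ((topDualPairing ℝ X).flip) (g f)
  exact hcont.isOpen_preimage _ isOpen_ball

lemma aux_weak_nbhd {U : Set X} (hU : IsWeaklyOpen X U) {z : X} (hz : z ∈ U) :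
    ∃ (I : Finset (X →L[ℝ] ℝ)) (δ : ℝ), 0 < δ ∧
      ∀ z' : X, (∀ F ∈ I, |F z' - F z| < δ) → z' ∈ U := by
  unfold IsWeaklyOpen at hU
  have hU' : @IsOpen (WeakSpace ℝ X)
      (TopologicalSpace.induced (fun (x : WeakSpace ℝ X) (F : X →L[ℝ] ℝ) => F x)
        Pi.topologicalSpace) (toWeakSpace ℝ X '' U) := hU
  obtain ⟨t, ht, hpre⟩ := isOpen_induced_iff.mp hU'
  have hzt : (fun (F : X →L[ℝ] ℝ) => F z) ∈ t := by
    have : toWeakSpace ℝ X z ∈ toWeakSpace ℝ X '' U := ⟨z, hz, rfl⟩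
    rw [← hpre] at this
    exact this
  obtain ⟨I, u, hu, hsub⟩ := isOpen_pi_iff.mp ht _ hzt
  by_cases hI : I.Nonempty
  · choose δf hδf hballf using fun (F : I) => Metric.isOpen_iff.mp (hu F F.2).1 _ (hu F F.2).2
    obtain ⟨F₀, hF₀⟩ := hI
    refine ⟨I, I.attach.inf' ⟨⟨F₀, hF₀⟩, Finset.mem_attach _ _⟩ δf, ?_, ?_⟩
    · refine (Finset.lt_inf'_iff _).2 ?_
      intro F _
      exact hδf F
    · intro z' hz'
      have hmem : (fun (F : X →L[ℝ] ℝ) => F z') ∈ (I : Set (X →L[ℝ] ℝ)).pi u := by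
        intro F hF
        apply hballf ⟨F, hF⟩
        rw [mem_ball, Real.dist_eq]
        exact lt_of_lt_of_le (hz' F hF)
          (Finset.inf'_le _ (Finset.mem_attach _ ⟨F, hF⟩))
      have : toWeakSpace ℝ X z' ∈ toWeakSpace ℝ X '' U := by
        rw [← hpre]
        exact hsub hmem
      obtain ⟨x, hxU, hxz⟩ := this
      rwa [← (toWeakSpace ℝ X).injective hxz]
  · refine ⟨I, 1, one_pos, fun z' hz' => ?_⟩
    have hmem : (fun (F : X →L[ℝ] ℝ) => F z') ∈ (I : Set (X →L[ℝ] ℝ)).pi u := by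
      intro F hF
      exact absurd (⟨F, hF⟩ : I.Nonempty) hI
    have : toWeakSpace ℝ X z' ∈ toWeakSpace ℝ X '' U := by
      rw [← hpre]; exact hsub hmem
    obtain ⟨x, hxU, hxz⟩ := this
    rwa [← (toWeakSpace ℝ X).injective hxz]

end AuxLemmas

section NL
variable {N : ℝ → ℝ → ℝ}

lemma aux_N_smul (N_homog : ∀ t a b : ℝ, N (t * a) (t * b) = |t| * N a b)
    {t : ℝ} (ht : 0 ≤ t) (a b : ℝ) : N (t * a) (t * b) = t * N a b := by
  rw [N_homog, abs_of_nonneg ht]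

lemma aux_N_conv (N_triangle : ∀ a b c d : ℝ, N (a + c) (b + d) ≤ N a b + N c d)
    (N_homog : ∀ t a b : ℝ, N (t * a) (t * b) = |t| * N a b)
    {s t : ℝ} (hs : 0 ≤ s) (ht : 0 ≤ t) (a b c d : ℝ) :
    N (s*a + t*c) (s*b + t*d) ≤ s * N a b + t * N c d := by
  calc N (s*a + t*c) (s*b + t*d) ≤ N (s*a) (s*b) + N (t*c) (t*d) := N_triangle _ _ _ _
  _ = s * N a b + t * N c d := by rw [aux_N_smul N_homog hs, aux_N_smul N_homog ht]

lemma aux_N_neg_left (N_abs : ∀ a b : ℝ, N a b = N |a| |b|) (a b : ℝ) : N (-a) b = N a b := by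
  rw [N_abs, abs_neg, ← N_abs]

lemma aux_N_mono_left (N_triangle : ∀ a b c d : ℝ, N (a + c) (b + d) ≤ N a b + N c d)
    (N_homog : ∀ t a b : ℝ, N (t * a) (t * b) = |t| * N a b)
    (N_abs : ∀ a b : ℝ, N a b = N |a| |b|)
    {a a' : ℝ} (b : ℝ) (ha : 0 ≤ a) (haa : a ≤ a') : N a b ≤ N a' b := by
  rcases eq_or_lt_of_le (le_trans ha haa) with h0 | h0
  · have : a = 0 := le_antisymm (h0 ▸ haa) ha
    rw [this, ← h0]
  · have ha'ne : a' ≠ 0 := ne_of_gt h0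
    have hs : 0 ≤ (a' + a)/(2*a') := by positivity
    have ht : 0 ≤ (a' - a)/(2*a') := div_nonneg (by linarith) (by linarith)
    have hst : (a' + a)/(2*a') + (a' - a)/(2*a') = 1 := by field_simp; ring
    have h1 : ((a' + a)/(2*a'))*a' + ((a' - a)/(2*a'))*(-a') = a := by field_simp; ring
    have h2 : ((a' + a)/(2*a'))*b + ((a' - a)/(2*a'))*b = b := by
      rw [← add_mul, hst, one_mul]
    calc N a b = N (((a' + a)/(2*a'))*a' + ((a' - a)/(2*a'))*(-a')) (((a' + a)/(2*a'))*b + ((a' - a)/(2*a'))*b) := by rw [h1, h2]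
    _ ≤ ((a' + a)/(2*a')) * N a' b + ((a' - a)/(2*a')) * N (-a') b :=
        aux_N_conv N_triangle N_homog hs ht _ _ _ _
    _ = ((a' + a)/(2*a') + (a' - a)/(2*a')) * N a' b := by rw [aux_N_neg_left N_abs]; ring
    _ = N a' b := by rw [hst, one_mul]

lemma aux_N_comm_aux : True := trivial

lemma aux_N_mono_right (N_triangle : ∀ a b c d : ℝ, N (a + c) (b + d) ≤ N a b + N c d)
    (N_homog : ∀ t a b : ℝ, N (t * a) (t * b) = |t| * N a b)
    (N_abs : ∀ a b : ℝ, N a b = N |a| |b|)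
    (a : ℝ) {b b' : ℝ} (hb : 0 ≤ b) (hbb : b ≤ b') : N a b ≤ N a b' := by
  rcases eq_or_lt_of_le (le_trans hb hbb) with h0 | h0
  · have : b = 0 := le_antisymm (h0 ▸ hbb) hb
    rw [this, ← h0]
  · have hb'ne : b' ≠ 0 := ne_of_gt h0
    have hs : 0 ≤ (b' + b)/(2*b') := by positivity
    have ht : 0 ≤ (b' - b)/(2*b') := div_nonneg (by linarith) (by linarith)
    have hst : (b' + b)/(2*b') + (b' - b)/(2*b') = 1 := by field_simp; ring
    have h1 : ((b' + b)/(2*b'))*b' + ((b' - b)/(2*b'))*(-b') = b := by field_simp; ring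
    have h2 : ((b' + b)/(2*b'))*a + ((b' - b)/(2*b'))*a = a := by
      rw [← add_mul, hst, one_mul]
    have hneg : N a (-b') = N a b' := by rw [N_abs, abs_neg, ← N_abs]
    calc N a b = N (((b' + b)/(2*b'))*a + ((b' - b)/(2*b'))*a) (((b' + b)/(2*b'))*b' + ((b' - b)/(2*b'))*(-b')) := by rw [h1, h2]
    _ ≤ ((b' + b)/(2*b')) * N a b' + ((b' - b)/(2*b')) * N a (-b') :=
        aux_N_conv N_triangle N_homog hs ht _ _ _ _
    _ = ((b' + b)/(2*b') + (b' - b)/(2*b')) * N a b' := by rw [hneg]; ring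
    _ = N a b' := by rw [hst, one_mul]

lemma aux_N_mono (N_triangle : ∀ a b c d : ℝ, N (a + c) (b + d) ≤ N a b + N c d)
    (N_homog : ∀ t a b : ℝ, N (t * a) (t * b) = |t| * N a b)
    (N_abs : ∀ a b : ℝ, N a b = N |a| |b|)
    {a a' b b' : ℝ} (ha : 0 ≤ a) (haa : a ≤ a') (hb : 0 ≤ b) (hbb : b ≤ b') :
    N a b ≤ N a' b' :=
  le_trans (aux_N_mono_left N_triangle N_homog N_abs b ha haa)
    (aux_N_mono_right N_triangle N_homog N_abs a' hb hbb)

lemma aux_N_left_val (N_homog : ∀ t a b : ℝ, N (t * a) (t * b) = |t| * N a b)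
    (N_norm₁ : N 1 0 = 1) {a : ℝ} (ha : 0 ≤ a) : N a 0 = a := by
  have := aux_N_smul N_homog ha 1 0
  simpa [N_norm₁] using this

lemma aux_N_right_val (N_homog : ∀ t a b : ℝ, N (t * a) (t * b) = |t| * N a b)
    (N_norm₂ : N 0 1 = 1) {b : ℝ} (hb : 0 ≤ b) : N 0 b = b := by
  have := aux_N_smul N_homog hb 0 1
  simpa [N_norm₂] using this

lemma aux_le_N_left (N_triangle : ∀ a b c d : ℝ, N (a + c) (b + d) ≤ N a b + N c d)
    (N_homog : ∀ t a b : ℝ, N (t * a) (t * b) = |t| * N a b)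
    (N_abs : ∀ a b : ℝ, N a b = N |a| |b|) (N_norm₁ : N 1 0 = 1)
    {a b : ℝ} (ha : 0 ≤ a) (hb : 0 ≤ b) : a ≤ N a b := by
  have := aux_N_mono_right N_triangle N_homog N_abs a le_rfl hb
  rwa [aux_N_left_val N_homog N_norm₁ ha] at this

lemma aux_le_N_right (N_triangle : ∀ a b c d : ℝ, N (a + c) (b + d) ≤ N a b + N c d)
    (N_homog : ∀ t a b : ℝ, N (t * a) (t * b) = |t| * N a b)
    (N_abs : ∀ a b : ℝ, N a b = N |a| |b|) (N_norm₂ : N 0 1 = 1)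
    {a b : ℝ} (ha : 0 ≤ a) (hb : 0 ≤ b) : b ≤ N a b := by
  have := aux_N_mono_left N_triangle N_homog N_abs b le_rfl ha
  rwa [aux_N_right_val N_homog N_norm₂ hb] at this

lemma aux_N_le_add (N_triangle : ∀ a b c d : ℝ, N (a + c) (b + d) ≤ N a b + N c d)
    (N_homog : ∀ t a b : ℝ, N (t * a) (t * b) = |t| * N a b)
    (N_norm₁ : N 1 0 = 1) (N_norm₂ : N 0 1 = 1)
    {a b : ℝ} (ha : 0 ≤ a) (hb : 0 ≤ b) : N a b ≤ a + b := by
  have h := N_triangle a 0 0 b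
  simpa [aux_N_left_val N_homog N_norm₁ ha, aux_N_right_val N_homog N_norm₂ hb] using h

lemma aux_N_one_one (N_triangle : ∀ a b c d : ℝ, N (a + c) (b + d) ≤ N a b + N c d)
    (N_homog : ∀ t a b : ℝ, N (t * a) (t * b) = |t| * N a b)
    (N_norm₁ : N 1 0 = 1) (N_norm₂ : N 0 1 = 1) : N 1 1 ≤ 2 := by
  have := aux_N_le_add N_triangle N_homog N_norm₁ N_norm₂ (zero_le_one) (zero_le_one)
  linarith

end NL

section TccAux
variable {X}

lemma aux_Tcc_le {t : ℝ} (ht : 0 < t)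
    (h : ∃ x : X, ‖x‖ = 1 ∧ ∃ (n : ℕ) (l : Fin n → ℝ) (W : Fin n → Set X),
      (∀ i, 0 ≤ l i) ∧ (∑ i, l i) = 1 ∧ (∀ i, IsRelWeakOpen X (W i)) ∧
      comboSet X l W ⊆ closedBall x t) : Tcc X ≤ t :=
  csInf_le ⟨0, fun r hr => le_of_lt hr.1⟩ ⟨ht, h⟩

lemma aux_exists_far {n : ℕ} {l : Fin n → ℝ} {V : Fin n → Set X}
    (hl0 : ∀ i, 0 ≤ l i) (hl1 : ∑ i, l i = 1) (hV : ∀ i, IsRelWeakOpen X (V i))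
    {xh : X} (hxh : ‖xh‖ = 1) {ε : ℝ} (hε : 0 < ε) :
    ∃ c ∈ comboSet X l V, Tcc X - ε < ‖c - xh‖ := by
  by_contra hcon
  push_neg at hcon
  choose w hw using fun i => (hV i).1
  have hc₀ : (∑ i, l i • w i) ∈ comboSet X l V := ⟨w, hw, rfl⟩
  have h0 : (0:ℝ) ≤ Tcc X - ε := le_trans (norm_nonneg _) (hcon _ hc₀)
  have hle : ∀ t : ℝ, Tcc X - ε ≤ t → 0 < t → Tcc X ≤ t := by
    intro t htt ht0
    refine aux_Tcc_le ht0 ⟨xh, hxh, n, l, V, hl0, hl1, hV, fun c hc => ?_⟩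
    rw [Metric.mem_closedBall, dist_eq_norm]
    exact le_trans (hcon c hc) htt
  rcases eq_or_lt_of_le h0 with heq | hlt
  · have h1 : Tcc X ≤ ε/2 := hle (ε/2) (by linarith) (by linarith)
    linarith
  · have := hle _ le_rfl hlt
    linarith

lemma aux_exists_unit [Nontrivial X] : ∃ x : X, ‖x‖ = 1 := by
  obtain ⟨x, hx⟩ := exists_ne (0 : X)
  have hx0 : (0:ℝ) < ‖x‖ := norm_pos_iff.mpr hx
  refine ⟨‖x‖⁻¹ • x, ?_⟩
  rw [norm_smul, norm_inv, norm_norm]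
  field_simp

lemma aux_exists_unit_near [Nontrivial X] (x₀ : X) (h : ‖x₀‖ ≤ 1) :
    ∃ xh : X, ‖xh‖ = 1 ∧ ‖x₀ - xh‖ ≤ 1 - ‖x₀‖ := by
  by_cases h0 : x₀ = 0
  · obtain ⟨xh, hxh⟩ := aux_exists_unit (X := X)
    exact ⟨xh, hxh, by simp [h0, hxh]⟩
  · have hx0 : (0:ℝ) < ‖x₀‖ := norm_pos_iff.mpr h0
    refine ⟨‖x₀‖⁻¹ • x₀, ?_, ?_⟩
    · rw [norm_smul, norm_inv, norm_norm]; field_simp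
    · have hid : x₀ - ‖x₀‖⁻¹ • x₀ = (1 - ‖x₀‖⁻¹) • x₀ := by
        rw [sub_smul, one_smul]
      rw [hid, norm_smul, Real.norm_eq_abs]
      have h1 : |1 - ‖x₀‖⁻¹| = ‖x₀‖⁻¹ - 1 := by
        rw [abs_of_nonpos]
        · ring
        · have h2 : (1:ℝ) ≤ ‖x₀‖⁻¹ := (one_le_inv₀ hx0).mpr h
          linarith
      rw [h1]
      have : (‖x₀‖⁻¹ - 1) * ‖x₀‖ = 1 - ‖x₀‖ := by field_simp
      linarith [this]

end TccAux

set_option maxHeartbeats 1000000 in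
theorem stmt_5 (X Y : Type*) [NormedAddCommGroup X] [NormedSpace ℝ X]
    [CompleteSpace X] [Nontrivial X] [NormedAddCommGroup Y] [NormedSpace ℝ Y]
    [CompleteSpace Y] [Nontrivial Y]
    (N : ℝ → ℝ → ℝ)
    (N_triangle : ∀ a b c d : ℝ, N (a + c) (b + d) ≤ N a b + N c d)
    (N_homog : ∀ t a b : ℝ, N (t * a) (t * b) = |t| * N a b)
    (N_pos : ∀ a b : ℝ, N a b = 0 → a = 0 ∧ b = 0)
    (N_abs : ∀ a b : ℝ, N a b = N |a| |b|)
    (N_norm₁ : N 1 0 = 1) (N_norm₂ : N 0 1 = 1)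
    (Z : Type*) [NormedAddCommGroup Z] [NormedSpace ℝ Z] [CompleteSpace Z]
    (e : Z ≃ₗ[ℝ] X × Y) (hZ : ∀ z : Z, ‖z‖ = N ‖(e z).1‖ ‖(e z).2‖)
    (γ : ℝ) (hγ : 0 < γ) (hγN : ∀ a b : ℝ, γ * (|a| + |b|) ≤ N a b) :
    2 * γ * (min (Tcc X) (Tcc Y) - 1) ≤ Tcc Z := by
  classical
  have hN2 : N 1 1 ≤ 2 := aux_N_one_one N_triangle N_homog N_norm₁ N_norm₂
  have hNsymm : ∀ (p : X) (q : Y), ‖e.symm (p, q)‖ = N ‖p‖ ‖q‖ := by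
    intro p q
    have := hZ (e.symm (p, q))
    rwa [e.apply_symm_apply] at this
  -- the two coordinate embeddings as continuous linear maps
  obtain ⟨J₁, hJ₁⟩ : ∃ J : X →L[ℝ] Z, ∀ x : X, J x = e.symm (x, 0) := by
    refine ⟨LinearMap.mkContinuous
      ({ toFun := fun x => e.symm (x, 0)
         map_add' := fun x y => by rw [← map_add, Prod.mk_add_mk, add_zero]
         map_smul' := fun c x => by rw [← map_smul, Prod.smul_mk, smul_zero]; rfl } : X →ₗ[ℝ] Z) 1
      (fun x => by
        simp only [LinearMap.coe_mk, AddHom.coe_mk, one_mul]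
        rw [hNsymm, norm_zero, aux_N_left_val N_homog N_norm₁ (norm_nonneg x)]), fun _ => rfl⟩
  obtain ⟨J₂, hJ₂⟩ : ∃ J : Y →L[ℝ] Z, ∀ y : Y, J y = e.symm (0, y) := by
    refine ⟨LinearMap.mkContinuous
      ({ toFun := fun y => e.symm (0, y)
         map_add' := fun x y => by rw [← map_add, Prod.mk_add_mk, add_zero]
         map_smul' := fun c x => by rw [← map_smul, Prod.smul_mk, smul_zero]; rfl } : Y →ₗ[ℝ] Z) 1
      (fun y => by
        simp only [LinearMap.coe_mk, AddHom.coe_mk, one_mul]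
        rw [hNsymm, norm_zero, aux_N_right_val N_homog N_norm₂ (norm_nonneg y)]), fun _ => rfl⟩
  apply le_csInf
  · -- the defining set of `Tcc Z` is nonempty: it contains 2
    obtain ⟨xh, hxh⟩ := aux_exists_unit (X := X)
    have hunit : ‖e.symm (xh, (0:Y))‖ = 1 := by
      rw [hNsymm, hxh, norm_zero, N_norm₁]
    refine ⟨2, by norm_num, e.symm (xh, 0), hunit, 1, fun _ => (1:ℝ),
      fun _ => closedBall (0:Z) 1, fun _ => zero_le_one, by simp,
      fun _ => ⟨⟨0, mem_closedBall_self zero_le_one⟩, univ, aux_isWeaklyOpen_univ,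
        (inter_univ _).symm⟩, ?_⟩
    rintro c ⟨wf, hwf, rfl⟩
    rw [mem_closedBall]
    have hsum : ∑ i : Fin 1, (1:ℝ) • wf i = wf 0 := by simp
    rw [hsum, dist_eq_norm]
    have h0 : ‖wf 0‖ ≤ 1 := mem_closedBall_zero_iff.mp (hwf 0)
    calc ‖wf 0 - e.symm (xh, 0)‖ ≤ ‖wf 0‖ + ‖e.symm (xh, (0:Y))‖ := norm_sub_le _ _
    _ ≤ 2 := by rw [hunit]; linarith
  rintro r ⟨hr, z₀, hz₀, n, l, W, hl0, hl1, hW, hsub⟩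
  obtain ⟨m, hm⟩ : ∃ m : ℝ, m = min (Tcc X) (Tcc Y) := ⟨_, rfl⟩
  obtain ⟨x₀, hx₀def⟩ : ∃ x₀ : X, x₀ = (e z₀).1 := ⟨_, rfl⟩
  obtain ⟨y₀, hy₀def⟩ : ∃ y₀ : Y, y₀ = (e z₀).2 := ⟨_, rfl⟩
  have hxy1 : N ‖x₀‖ ‖y₀‖ = 1 := by rw [hx₀def, hy₀def, ← hZ z₀, hz₀]
  have hx1 : ‖x₀‖ ≤ 1 := by
    have := aux_le_N_left N_triangle N_homog N_abs N_norm₁ (norm_nonneg x₀) (norm_nonneg y₀)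
    rw [hxy1] at this; exact this
  have hy1 : ‖y₀‖ ≤ 1 := by
    have := aux_le_N_right N_triangle N_homog N_abs N_norm₂ (norm_nonneg x₀) (norm_nonneg y₀)
    rw [hxy1] at this; exact this
  have hxysum : 1 ≤ ‖x₀‖ + ‖y₀‖ := by
    have := aux_N_le_add N_triangle N_homog N_norm₁ N_norm₂ (norm_nonneg x₀) (norm_nonneg y₀)
    rw [hxy1] at this; exact this
  have hnpos : 0 < n := by
    rcases Nat.eq_zero_or_pos n with h | h
    · subst h; simp at hl1
    · exact h
  haveI : Nonempty (Fin n) := ⟨⟨0, hnpos⟩⟩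
  -- choose points and weakly open sets
  choose w hwW using fun i => (hW i).1
  choose U hUw hWU using fun i => (hW i).2
  have hwB : ∀ i, ‖w i‖ ≤ 1 := by
    intro i
    have := hwW i
    rw [hWU i] at this
    exact mem_closedBall_zero_iff.mp this.1
  have hwU : ∀ i, w i ∈ U i := by
    intro i
    have := hwW i
    rw [hWU i] at this
    exact this.2
  have hUopen : ∀ i, IsOpen (U i) := fun i => aux_isOpen_of_isWeaklyOpen (hUw i)
  choose ρ hρpos hρsub using fun i => Metric.isOpen_iff.mp (hUopen i) _ (hwU i)
  obtain ⟨η, hη0, hη12, hηρ⟩ : ∃ η : ℝ, 0 < η ∧ η ≤ 1/2 ∧ ∀ i, η < ρ i := by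
    have hρmpos : 0 < Finset.univ.inf' Finset.univ_nonempty ρ := by
      rw [Finset.lt_inf'_iff]
      exact fun i _ => hρpos i
    refine ⟨min (1/2) ((Finset.univ.inf' Finset.univ_nonempty ρ)/2),
      lt_min (by norm_num) (by positivity), min_le_left _ _, fun i => ?_⟩
    have h2 : Finset.univ.inf' Finset.univ_nonempty ρ ≤ ρ i :=
      Finset.inf'_le _ (Finset.mem_univ i)
    have h3 : min (1/2) ((Finset.univ.inf' Finset.univ_nonempty ρ)/2)
        ≤ (Finset.univ.inf' Finset.univ_nonempty ρ)/2 := min_le_right _ _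
    linarith
  obtain ⟨θ, hθdef⟩ : ∃ θ : ℝ, θ = 1 - η := ⟨_, rfl⟩
  have hθ0 : 0 < θ := by rw [hθdef]; linarith
  have hθ1 : θ ≤ 1 := by rw [hθdef]; linarith
  have hθη : θ + η = 1 := by rw [hθdef]; ring
  have hθw : ∀ i, θ • w i ∈ U i := by
    intro i
    apply hρsub i
    rw [mem_ball, dist_eq_norm]
    have hid : θ • w i - w i = (θ - 1) • w i := by rw [sub_smul, one_smul]
    rw [hid, norm_smul, Real.norm_eq_abs]
    have habs : |θ - 1| = η := by
      rw [abs_of_nonpos (by rw [hθdef]; linarith), hθdef]; ring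
    rw [habs]
    calc η * ‖w i‖ ≤ η * 1 := mul_le_mul_of_nonneg_left (hwB i) hη0.le
    _ < ρ i := by rw [mul_one]; exact hηρ i
  choose I δ hδpos hInbhd using fun i => aux_weak_nbhd (hUw i) (hθw i)
  -- per-index scalars and base points
  have hPI : ∀ i, ∃ (av bv : ℝ) (xb : X) (yb : Y), η/2 ≤ av ∧ η/2 ≤ bv ∧ N av bv ≤ 1 ∧
      1 ≤ av + bv ∧ ‖xb‖ ≤ 1 ∧ ‖yb‖ ≤ 1 ∧
      av • xb = θ • (e (w i)).1 ∧ bv • yb = θ • (e (w i)).2 := by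
    intro i
    obtain ⟨c, hcdef⟩ : ∃ c : ℝ, c = ‖(e (w i)).1‖ := ⟨_, rfl⟩
    obtain ⟨d, hddef⟩ : ∃ d : ℝ, d = ‖(e (w i)).2‖ := ⟨_, rfl⟩
    have hc0 : 0 ≤ c := by rw [hcdef]; exact norm_nonneg _
    have hd0 : 0 ≤ d := by rw [hddef]; exact norm_nonneg _
    have hcd : N c d ≤ 1 := by rw [hcdef, hddef, ← hZ (w i)]; exact hwB i
    have hN0cd : 0 ≤ N c d := le_trans (by positivity) (hγN c d)
    have hstep : ∀ p q : ℝ, N (p + η/2) (q + η/2) ≤ N p q + η/2 * N 1 1 := by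
      intro p q
      have h1 := N_triangle p q (η/2) (η/2)
      have h2 : N (η/2) (η/2) = η/2 * N 1 1 := by
        have := aux_N_smul N_homog (by positivity : (0:ℝ) ≤ η/2) 1 1
        simpa using this
      linarith
    have hN11 : η/2 * N 1 1 ≤ η := by
      have h9 := mul_le_mul_of_nonneg_left hN2 (by positivity : (0:ℝ) ≤ η/2)
      linarith
    rcases eq_or_lt_of_le hN0cd with hNi | hNi
    · -- N c d = 0, so both coordinates of w i vanish
      have hc0' : c = 0 ∧ d = 0 := by
        have h := hγN c d
        rw [← hNi, abs_of_nonneg hc0, abs_of_nonneg hd0] at h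
        constructor <;> nlinarith
      have hu0 : (e (w i)).1 = 0 := norm_eq_zero.mp (by rw [← hcdef]; exact hc0'.1)
      have hv0 : (e (w i)).2 = 0 := norm_eq_zero.mp (by rw [← hddef]; exact hc0'.2)
      refine ⟨θ * ‖x₀‖ + η/2, θ * ‖y₀‖ + η/2, 0, 0,
        by have : 0 ≤ θ * ‖x₀‖ := by positivity
           linarith,
        by have : 0 ≤ θ * ‖y₀‖ := by positivity
           linarith, ?_, ?_,
        by simp, by simp, by simp [hu0], by simp [hv0]⟩
      · have h1 := hstep (θ * ‖x₀‖) (θ * ‖y₀‖)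
        have h2 : N (θ * ‖x₀‖) (θ * ‖y₀‖) = θ * 1 := by
          rw [aux_N_smul N_homog hθ0.le, hxy1]
        rw [h2] at h1
        linarith
      · nlinarith
    · -- radial inflation of (c, d)
      obtain ⟨Nu, hNudef⟩ : ∃ Nu : ℝ, Nu = N c d := ⟨_, rfl⟩
      have hNupos : 0 < Nu := by rw [hNudef]; exact hNi
      have hNu1 : Nu ≤ 1 := by rw [hNudef]; exact hcd
      obtain ⟨av, havdef⟩ : ∃ av : ℝ, av = θ / Nu * c + η/2 := ⟨_, rfl⟩
      obtain ⟨bv, hbvdef⟩ : ∃ bv : ℝ, bv = θ / Nu * d + η/2 := ⟨_, rfl⟩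
      have havpos : 0 < av := by
        rw [havdef]
        have : 0 ≤ θ / Nu * c := by positivity
        linarith
      have hbvpos : 0 < bv := by
        rw [hbvdef]
        have : 0 ≤ θ / Nu * d := by positivity
        linarith
      refine ⟨av, bv, (θ / av) • (e (w i)).1, (θ / bv) • (e (w i)).2,
        ?_, ?_, ?_, ?_, ?_, ?_, ?_, ?_⟩
      · rw [havdef]
        have : 0 ≤ θ / Nu * c := by positivity
        linarith
      · rw [hbvdef]
        have : 0 ≤ θ / Nu * d := by positivity
        linarith
      · have h1 := hstep (θ / Nu * c) (θ / Nu * d)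
        have h2 : N (θ / Nu * c) (θ / Nu * d) = θ / Nu * N c d := by
          rw [aux_N_smul N_homog (by positivity : (0:ℝ) ≤ θ / Nu)]
        have h3 : θ / Nu * N c d = θ := by rw [← hNudef]; field_simp
        rw [h2, h3] at h1
        rw [havdef, hbvdef]
        linarith
      · -- 1 ≤ av + bv
        have hcdge : Nu ≤ c + d := by
          rw [hNudef]
          exact aux_N_le_add N_triangle N_homog N_norm₁ N_norm₂ hc0 hd0
        have h5 : θ / Nu * Nu ≤ θ / Nu * (c + d) :=
          mul_le_mul_of_nonneg_left hcdge (by positivity)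
        have h3 : θ / Nu * Nu = θ := by field_simp
        rw [havdef, hbvdef]
        nlinarith
      · -- ‖xb‖ ≤ 1
        rw [norm_smul, Real.norm_eq_abs, abs_of_nonneg (by positivity : (0:ℝ) ≤ θ / av),
          ← hcdef]
        have hθc : θ * c ≤ av := by
          have hq : θ * c ≤ θ / Nu * c := by
            apply mul_le_mul_of_nonneg_right _ hc0
            rw [le_div_iff₀ hNupos]
            nlinarith
          rw [havdef]
          linarith
        rw [div_mul_eq_mul_div, div_le_one havpos]
        exact hθc
      · rw [norm_smul, Real.norm_eq_abs, abs_of_nonneg (by positivity : (0:ℝ) ≤ θ / bv),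
          ← hddef]
        have hθd : θ * d ≤ bv := by
          have hq : θ * d ≤ θ / Nu * d := by
            apply mul_le_mul_of_nonneg_right _ hd0
            rw [le_div_iff₀ hNupos]
            nlinarith
          rw [hbvdef]
          linarith
        rw [div_mul_eq_mul_div, div_le_one hbvpos]
        exact hθd
      · rw [smul_smul, mul_div_cancel₀ _ (ne_of_gt havpos)]
      · rw [smul_smul, mul_div_cancel₀ _ (ne_of_gt hbvpos)]
  choose av bv xb yb hav hbv hNab hab hxb hyb haxb hbyb using hPI
  obtain ⟨A, hAdef⟩ : ∃ A : ℝ, A = ∑ i, l i * av i := ⟨_, rfl⟩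
  obtain ⟨B, hBdef⟩ : ∃ B : ℝ, B = ∑ i, l i * bv i := ⟨_, rfl⟩
  have hA0 : η/2 ≤ A := by
    rw [hAdef]
    calc η/2 = ∑ i, l i * (η/2) := by rw [← Finset.sum_mul, hl1, one_mul]
    _ ≤ ∑ i, l i * av i := Finset.sum_le_sum fun i _ =>
        mul_le_mul_of_nonneg_left (hav i) (hl0 i)
  have hB0 : η/2 ≤ B := by
    rw [hBdef]
    calc η/2 = ∑ i, l i * (η/2) := by rw [← Finset.sum_mul, hl1, one_mul]
    _ ≤ ∑ i, l i * bv i := Finset.sum_le_sum fun i _ =>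
        mul_le_mul_of_nonneg_left (hbv i) (hl0 i)
  have hApos : 0 < A := lt_of_lt_of_le (by positivity) hA0
  have hBpos : 0 < B := lt_of_lt_of_le (by positivity) hB0
  have hav0 : ∀ i, 0 ≤ av i := fun i => le_trans (by positivity) (hav i)
  have hbv0 : ∀ i, 0 ≤ bv i := fun i => le_trans (by positivity) (hbv i)
  have hA1 : A ≤ 1 := by
    rw [hAdef]
    calc ∑ i, l i * av i ≤ ∑ i, l i * 1 := Finset.sum_le_sum fun i _ => by
          have h1 : av i ≤ N (av i) (bv i) :=
            aux_le_N_left N_triangle N_homog N_abs N_norm₁ (hav0 i) (hbv0 i)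
          exact mul_le_mul_of_nonneg_left (le_trans h1 (hNab i)) (hl0 i)
    _ = 1 := by simpa using hl1
  have hB1 : B ≤ 1 := by
    rw [hBdef]
    calc ∑ i, l i * bv i ≤ ∑ i, l i * 1 := Finset.sum_le_sum fun i _ => by
          have h1 : bv i ≤ N (av i) (bv i) :=
            aux_le_N_right N_triangle N_homog N_abs N_norm₂ (hav0 i) (hbv0 i)
          exact mul_le_mul_of_nonneg_left (le_trans h1 (hNab i)) (hl0 i)
    _ = 1 := by simpa using hl1
  have hAB : 1 ≤ A + B := by
    rw [hAdef, hBdef, ← Finset.sum_add_distrib]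
    calc (1:ℝ) = ∑ i, l i := hl1.symm
    _ ≤ ∑ i, (l i * av i + l i * bv i) := Finset.sum_le_sum fun i _ => by
          nlinarith [hl0 i, hab i]
  -- the relatively weakly open subsets of the unit balls of X and Y
  obtain ⟨VX, hVXdef⟩ : ∃ V : Fin n → Set X, ∀ i, V i = closedBall (0:X) 1 ∩
      {x : X | ∀ F ∈ I i, |(av i • (F.comp J₁)) x - F (J₁ (θ • (e (w i)).1))| < δ i / 2} :=
    ⟨_, fun _ => rfl⟩
  obtain ⟨VY, hVYdef⟩ : ∃ V : Fin n → Set Y, ∀ i, V i = closedBall (0:Y) 1 ∩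
      {y : Y | ∀ F ∈ I i, |(bv i • (F.comp J₂)) y - F (J₂ (θ • (e (w i)).2))| < δ i / 2} :=
    ⟨_, fun _ => rfl⟩
  have happX : ∀ i (F : Z →L[ℝ] ℝ) (x : X), (av i • (F.comp J₁)) x = F (J₁ (av i • x)) := by
    intro i F x
    simp [map_smul, smul_eq_mul]
  have happY : ∀ i (F : Z →L[ℝ] ℝ) (y : Y), (bv i • (F.comp J₂)) y = F (J₂ (bv i • y)) := by
    intro i F y
    simp [map_smul, smul_eq_mul]
  have hVXopen : ∀ i, IsRelWeakOpen X (VX i) := by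
    intro i
    rw [hVXdef i]
    refine ⟨⟨xb i, mem_closedBall_zero_iff.mpr (hxb i), ?_⟩, _,
      aux_isWeaklyOpen_conds (I i) (fun F => av i • (F.comp J₁))
      (fun F => F (J₁ (θ • (e (w i)).1))) (δ i / 2), rfl⟩
    intro F hF
    rw [happX i F (xb i), haxb i, sub_self, abs_zero]
    linarith [hδpos i]
  have hVYopen : ∀ i, IsRelWeakOpen Y (VY i) := by
    intro i
    rw [hVYdef i]
    refine ⟨⟨yb i, mem_closedBall_zero_iff.mpr (hyb i), ?_⟩, _,
      aux_isWeaklyOpen_conds (I i) (fun F => bv i • (F.comp J₂))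
      (fun F => F (J₂ (θ • (e (w i)).2))) (δ i / 2), rfl⟩
    intro F hF
    rw [happY i F (yb i), hbyb i, sub_self, abs_zero]
    linarith [hδpos i]
  -- the key containment: scaled pairs of points of VX, VY lie in W
  have hkey : ∀ i (x' : X) (y' : Y), x' ∈ VX i → y' ∈ VY i →
      e.symm (av i • x', bv i • y') ∈ W i := by
    intro i x' y' hx' hy'
    rw [hVXdef i] at hx'
    rw [hVYdef i] at hy'
    obtain ⟨hx'b, hx'c⟩ := hx'
    obtain ⟨hy'b, hy'c⟩ := hy'
    rw [hWU i]
    constructor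
    · rw [mem_closedBall_zero_iff, hNsymm, norm_smul, norm_smul, Real.norm_eq_abs,
        Real.norm_eq_abs, abs_of_nonneg (hav0 i), abs_of_nonneg (hbv0 i)]
      have h1 : av i * ‖x'‖ ≤ av i * 1 := mul_le_mul_of_nonneg_left
        (mem_closedBall_zero_iff.mp hx'b) (hav0 i)
      have h2 : bv i * ‖y'‖ ≤ bv i * 1 := mul_le_mul_of_nonneg_left
        (mem_closedBall_zero_iff.mp hy'b) (hbv0 i)
      calc N (av i * ‖x'‖) (bv i * ‖y'‖) ≤ N (av i) (bv i) :=
            aux_N_mono N_triangle N_homog N_abs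
              (mul_nonneg (hav0 i) (norm_nonneg x')) (by linarith)
              (mul_nonneg (hbv0 i) (norm_nonneg y')) (by linarith)
      _ ≤ 1 := hNab i
    · apply hInbhd i
      intro F hF
      have hz'eq : e.symm (av i • x', bv i • y') = J₁ (av i • x') + J₂ (bv i • y') := by
        apply e.injective
        rw [map_add, e.apply_symm_apply, hJ₁, hJ₂, e.apply_symm_apply, e.apply_symm_apply,
          Prod.mk_add_mk, add_zero, zero_add]
      have hθweq : θ • w i = J₁ (θ • (e (w i)).1) + J₂ (θ • (e (w i)).2) := by
        apply e.injective
        rw [map_add, map_smul, hJ₁, hJ₂, e.apply_symm_apply, e.apply_symm_apply,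
          Prod.mk_add_mk, add_zero, zero_add]
        rfl
      have hx'far := hx'c F hF
      have hy'far := hy'c F hF
      rw [happX i F x'] at hx'far
      rw [happY i F y'] at hy'far
      have hsplit : F (e.symm (av i • x', bv i • y')) - F (θ • w i)
          = (F (J₁ (av i • x')) - F (J₁ (θ • (e (w i)).1)))
            + (F (J₂ (bv i • y')) - F (J₂ (θ • (e (w i)).2))) := by
        rw [hz'eq, hθweq, map_add, map_add]; ring
      rw [hsplit]
      calc |(F (J₁ (av i • x')) - F (J₁ (θ • (e (w i)).1)))
            + (F (J₂ (bv i • y')) - F (J₂ (θ • (e (w i)).2)))|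
          ≤ |F (J₁ (av i • x')) - F (J₁ (θ • (e (w i)).1))|
            + |F (J₂ (bv i • y')) - F (J₂ (θ • (e (w i)).2))| := abs_add_le _ _
      _ < δ i / 2 + δ i / 2 := add_lt_add hx'far hy'far
      _ = δ i := by ring
  have key : ∀ ε : ℝ, 0 < ε → 2*γ*(m - 1) ≤ r + 2*γ*ε := by
    intro ε hε
    obtain ⟨xh, hxh, hxhnear⟩ := aux_exists_unit_near (X := X) x₀ hx1
    obtain ⟨yh, hyh, hyhnear⟩ := aux_exists_unit_near (X := Y) y₀ hy1
    obtain ⟨μX, hμXdef⟩ : ∃ f : Fin n → ℝ, ∀ i, f i = l i * av i / A :=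
      ⟨fun i => l i * av i / A, fun _ => rfl⟩
    obtain ⟨μY, hμYdef⟩ : ∃ f : Fin n → ℝ, ∀ i, f i = l i * bv i / B :=
      ⟨fun i => l i * bv i / B, fun _ => rfl⟩
    have hμX0 : ∀ i, 0 ≤ μX i := fun i => by
      rw [hμXdef]
      exact div_nonneg (mul_nonneg (hl0 i) (hav0 i)) hApos.le
    have hμY0 : ∀ i, 0 ≤ μY i := fun i => by
      rw [hμYdef]
      exact div_nonneg (mul_nonneg (hl0 i) (hbv0 i)) hBpos.le
    have hμX1 : ∑ i, μX i = 1 := by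
      have h1 : ∀ i ∈ Finset.univ, μX i = l i * av i / A := fun i _ => hμXdef i
      rw [Finset.sum_congr rfl h1, ← Finset.sum_div, ← hAdef, div_self (ne_of_gt hApos)]
    have hμY1 : ∑ i, μY i = 1 := by
      have h1 : ∀ i ∈ Finset.univ, μY i = l i * bv i / B := fun i _ => hμYdef i
      rw [Finset.sum_congr rfl h1, ← Finset.sum_div, ← hBdef, div_self (ne_of_gt hBpos)]
    obtain ⟨cX, hcXmem, hcXfar⟩ := aux_exists_far hμX0 hμX1 hVXopen hxh hε
    obtain ⟨cY, hcYmem, hcYfar⟩ := aux_exists_far hμY0 hμY1 hVYopen hyh hε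
    obtain ⟨wX, hwXmem, hcXeq⟩ := hcXmem
    obtain ⟨wY, hwYmem, hcYeq⟩ := hcYmem
    obtain ⟨zs, hzsdef⟩ : ∃ z : Z, z = ∑ i, l i • (e.symm (av i • wX i, bv i • wY i)) :=
      ⟨_, rfl⟩
    have hzsmem : zs ∈ comboSet Z l W :=
      ⟨fun i => e.symm (av i • wX i, bv i • wY i),
        fun i => hkey i _ _ (hwXmem i) (hwYmem i), hzsdef⟩
    have hclose : ‖zs - z₀‖ ≤ r := by
      have := hsub hzsmem
      rwa [mem_closedBall, dist_eq_norm] at this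
    have hAcX : A • cX = ∑ i, (l i * av i) • wX i := by
      rw [hcXeq, Finset.smul_sum]
      refine Finset.sum_congr rfl fun i _ => ?_
      rw [smul_smul]
      congr 1
      rw [hμXdef i]
      field_simp
    have hBcY : B • cY = ∑ i, (l i * bv i) • wY i := by
      rw [hcYeq, Finset.smul_sum]
      refine Finset.sum_congr rfl fun i _ => ?_
      rw [smul_smul]
      congr 1
      rw [hμYdef i]
      field_simp
    have hez : e zs = (A • cX, B • cY) := by
      have h1 : e zs = ∑ i, l i • ((av i • wX i, bv i • wY i) : X × Y) := by
        rw [hzsdef, map_sum]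
        exact Finset.sum_congr rfl fun i _ => by rw [map_smul, e.apply_symm_apply]
      rw [h1, Prod.ext_iff]
      constructor
      · rw [Prod.fst_sum, hAcX]
        exact Finset.sum_congr rfl fun i _ => by simp [smul_smul]
      · rw [Prod.snd_sum, hBcY]
        exact Finset.sum_congr rfl fun i _ => by simp [smul_smul]
    have hnormeq : ‖zs - z₀‖ = N ‖A • cX - x₀‖ ‖B • cY - y₀‖ := by
      rw [hZ (zs - z₀), map_sub, hez, hx₀def, hy₀def]
      rfl
    have hcX1 : ‖cX‖ ≤ 1 := by
      rw [hcXeq]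
      calc ‖∑ i, μX i • wX i‖ ≤ ∑ i, ‖μX i • wX i‖ := norm_sum_le _ _
      _ ≤ ∑ i, μX i := Finset.sum_le_sum fun i _ => by
          rw [norm_smul, Real.norm_eq_abs, abs_of_nonneg (hμX0 i)]
          have h4 := hwXmem i
          rw [hVXdef i] at h4
          have h3 := mem_closedBall_zero_iff.mp h4.1
          nlinarith [hμX0 i]
      _ = 1 := hμX1
    have hcY1 : ‖cY‖ ≤ 1 := by
      rw [hcYeq]
      calc ‖∑ i, μY i • wY i‖ ≤ ∑ i, ‖μY i • wY i‖ := norm_sum_le _ _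
      _ ≤ ∑ i, μY i := Finset.sum_le_sum fun i _ => by
          rw [norm_smul, Real.norm_eq_abs, abs_of_nonneg (hμY0 i)]
          have h4 := hwYmem i
          rw [hVYdef i] at h4
          have h3 := mem_closedBall_zero_iff.mp h4.1
          nlinarith [hμY0 i]
      _ = 1 := hμY1
    have hmX : m ≤ Tcc X := by rw [hm]; exact min_le_left _ _
    have hmY : m ≤ Tcc Y := by rw [hm]; exact min_le_right _ _
    have hDX : m - ε - (1 - ‖x₀‖) - (1 - A) ≤ ‖A • cX - x₀‖ := by
      have hiden : cX - xh = (A • cX - x₀) + (x₀ - xh) + (1 - A) • cX := by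
        rw [sub_smul, one_smul]; abel
      have htri : ‖cX - xh‖ ≤ ‖A • cX - x₀‖ + ‖x₀ - xh‖ + ‖(1 - A) • cX‖ := by
        rw [hiden]; exact norm_add₃_le
      have h1A : ‖(1 - A) • cX‖ ≤ 1 - A := by
        rw [norm_smul, Real.norm_eq_abs, abs_of_nonneg (by linarith : (0:ℝ) ≤ 1 - A)]
        calc (1 - A) * ‖cX‖ ≤ (1 - A) * 1 :=
              mul_le_mul_of_nonneg_left hcX1 (by linarith)
        _ = 1 - A := mul_one _
      have hfarX : m - ε ≤ ‖cX - xh‖ := by linarith only [hcXfar, hmX]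
      linarith only [hfarX, htri, h1A, hxhnear]
    have hDY : m - ε - (1 - ‖y₀‖) - (1 - B) ≤ ‖B • cY - y₀‖ := by
      have hiden : cY - yh = (B • cY - y₀) + (y₀ - yh) + (1 - B) • cY := by
        rw [sub_smul, one_smul]; abel
      have htri : ‖cY - yh‖ ≤ ‖B • cY - y₀‖ + ‖y₀ - yh‖ + ‖(1 - B) • cY‖ := by
        rw [hiden]; exact norm_add₃_le
      have h1B : ‖(1 - B) • cY‖ ≤ 1 - B := by
        rw [norm_smul, Real.norm_eq_abs, abs_of_nonneg (by linarith : (0:ℝ) ≤ 1 - B)]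
        calc (1 - B) * ‖cY‖ ≤ (1 - B) * 1 :=
              mul_le_mul_of_nonneg_left hcY1 (by linarith)
        _ = 1 - B := mul_one _
      have hfarY : m - ε ≤ ‖cY - yh‖ := by linarith only [hcYfar, hmY]
      linarith only [hfarY, htri, h1B, hyhnear]
    have hfin : γ * (‖A • cX - x₀‖ + ‖B • cY - y₀‖) ≤ r := by
      have h := hγN ‖A • cX - x₀‖ ‖B • cY - y₀‖
      rw [abs_of_nonneg (norm_nonneg _), abs_of_nonneg (norm_nonneg _)] at h
      calc γ * (‖A • cX - x₀‖ + ‖B • cY - y₀‖) ≤ N ‖A • cX - x₀‖ ‖B • cY - y₀‖ := h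
      _ = ‖zs - z₀‖ := hnormeq.symm
      _ ≤ r := hclose
    have hsum2 : 2*m - 2*ε - 2 ≤ ‖A • cX - x₀‖ + ‖B • cY - y₀‖ := by
      linarith only [hDX, hDY, hxysum, hAB]
    have h2 : γ * (2*m - 2*ε - 2) ≤ r :=
      le_trans (mul_le_mul_of_nonneg_left hsum2 hγ.le) hfin
    have hid : 2*γ*(m - 1) = γ*(2*m - 2*ε - 2) + 2*γ*ε := by ring
    linarith only [h2, hid]
  refine le_of_forall_pos_le_add fun ε' hε' => ?_
  have h := key (ε'/(2*γ)) (by positivity)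
  have heq : r + 2*γ*(ε'/(2*γ)) = r + ε' := by field_simp
  rw [hm] at h
  linarith
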